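/- The function z ↦ (π/2)·(exp(2z) − 1)^{1/2}·z is convex on [0,∞). -/

import Mathlib

open Real Set

private lemma upos {z : ℝ} (hz : 0 < z) : 0 < Real.exp (2 * z) - 1 := by
  have : (1:ℝ) < Real.exp (2 * z) := by
    rw [show (1:ℝ) = Real.exp 0 by simp]
    exact Real.exp_lt_exp.mpr (by linarith)
  linarith

private lemma hasDerivAt_u (z : ℝ) :
    HasDerivAt (fun z : ℝ => Real.exp (2 * z) - 1) (2 * Real.exp (2 * z)) z := by
  have h1 : HasDerivAt (fun z : ℝ => 2 * z) 2 z := by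
    simpa using (hasDerivAt_id z).const_mul 2
  have := (h1.exp).sub_const 1
  refine this.congr_deriv ?_
  ring

private lemma hasDerivAt_sqrtu {z : ℝ} (hz : 0 < z) :
    HasDerivAt (fun z : ℝ => Real.sqrt (Real.exp (2 * z) - 1))
      (Real.exp (2 * z) / Real.sqrt (Real.exp (2 * z) - 1)) z := by
  have hu := upos hz
  have h := (Real.hasDerivAt_sqrt (ne_of_gt hu)).comp z (hasDerivAt_u z)
  refine h.congr_deriv ?_
  field_simp

private lemma hasDerivAt_g {z : ℝ} (hz : 0 < z) :
    HasDerivAt (fun z : ℝ => Real.sqrt (Real.exp (2 * z) - 1) * z)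
      ((Real.exp (2 * z) * z + (Real.exp (2 * z) - 1)) / Real.sqrt (Real.exp (2 * z) - 1)) z := by
  have hu := upos hz
  have hsq : Real.sqrt (Real.exp (2 * z) - 1) ≠ 0 := by positivity
  have h := (hasDerivAt_sqrtu hz).mul (hasDerivAt_id z)
  refine h.congr_deriv ?_
  field_simp
  simp only [id_eq, Real.sq_sqrt hu.le]
  ring

/-- g1 is the derivative of g on (0,∞). -/
noncomputable def g1 (z : ℝ) : ℝ :=
  (Real.exp (2 * z) * z + (Real.exp (2 * z) - 1)) / Real.sqrt (Real.exp (2 * z) - 1)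

private lemma hasDerivAt_g1 {z : ℝ} (hz : 0 < z) :
    HasDerivAt g1
      ((Real.exp (2 * z) * (2 * z + 3) * Real.sqrt (Real.exp (2 * z) - 1)
        - (Real.exp (2 * z) * z + (Real.exp (2 * z) - 1))
            * (Real.exp (2 * z) / Real.sqrt (Real.exp (2 * z) - 1)))
        / Real.sqrt (Real.exp (2 * z) - 1) ^ 2) z := by
  have hu := upos hz
  have hsq : Real.sqrt (Real.exp (2 * z) - 1) ≠ 0 := by positivity
  have hN : HasDerivAt (fun z : ℝ => Real.exp (2 * z) * z + (Real.exp (2 * z) - 1))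
      (Real.exp (2 * z) * (2 * z + 3)) z := by
    have h1 : HasDerivAt (fun z : ℝ => 2 * z) 2 z := by
      simpa using (hasDerivAt_id z).const_mul 2
    have h2 := (h1.exp.mul (hasDerivAt_id z)).add (hasDerivAt_u z)
    refine h2.congr_deriv ?_
    simp only [id_eq]
    ring
  exact hN.div (hasDerivAt_sqrtu hz) hsq

private lemma g1_deriv_nonneg {z : ℝ} (hz : 0 < z) : 0 ≤ deriv g1 z := by
  have hu := upos hz
  have hsqpos : 0 < Real.sqrt (Real.exp (2 * z) - 1) := Real.sqrt_pos.mpr hu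
  rw [(hasDerivAt_g1 hz).deriv]
  have hsq2 : Real.sqrt (Real.exp (2 * z) - 1) ^ 2 = Real.exp (2 * z) - 1 :=
    Real.sq_sqrt (le_of_lt hu)
  set D := Real.sqrt (Real.exp (2 * z) - 1) with hD
  set E := Real.exp (2 * z) with hE
  have hDD : D * D = E - 1 := by rw [← hsq2]; ring
  have key : 0 ≤ E * (2 * z + 3) * D - (E * z + (E - 1)) * (E / D) := by
    rw [sub_nonneg, ← mul_div_assoc, div_le_iff₀ hsqpos]
    have hcollapse : E * (2 * z + 3) * D * D = E * (2 * z + 3) * (E - 1) := by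
      rw [mul_assoc (E * (2 * z + 3)) D D, hDD]
    rw [hcollapse]
    have hexp : 1 + 2 * z ≤ E := by
      have := Real.add_one_le_exp (2 * z); linarith
    nlinarith [Real.exp_pos (2 * z), hz.le, mul_nonneg (sub_nonneg.mpr hexp) hz.le,
      sq_nonneg z]
  positivity

private lemma g_convex :
    ConvexOn ℝ (Set.Ici 0)
      (fun z : ℝ => Real.sqrt (Real.exp (2 * z) - 1) * z) := by
  have hint : interior (Set.Ici (0:ℝ)) = Set.Ioi 0 := interior_Ici
  apply MonotoneOn.convexOn_of_deriv (convex_Ici 0)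
  · exact ((Real.continuous_exp.comp (continuous_const.mul continuous_id)).sub
      continuous_const).sqrt.mul continuous_id |>.continuousOn
  · rw [hint]
    intro z hz
    exact (hasDerivAt_g hz).differentiableAt.differentiableWithinAt
  · rw [hint]
    have hg1mono : MonotoneOn g1 (Set.Ioi 0) := by
      have : MonotoneOn g1 (Set.Ioi 0) := by
        apply monotoneOn_of_deriv_nonneg (convex_Ioi 0)
        · intro z hz
          exact (hasDerivAt_g1 (by exact hz : (0:ℝ) < z)).continuousAt.continuousWithinAt
        · rw [interior_Ioi]
          intro z hz
          exact (hasDerivAt_g1 hz).differentiableAt.differentiableWithinAt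
        · rw [interior_Ioi]
          intro z hz
          exact g1_deriv_nonneg hz
      exact this
    apply hg1mono.congr
    intro z hz
    exact ((hasDerivAt_g hz).deriv).symm

/-- The function z ↦ (π/2)·(exp(2z) − 1)^{1/2}·z is convex on [0,∞). -/
theorem stmt3 :
    ConvexOn ℝ (Set.Ici 0)
      (fun z : ℝ => Real.pi / 2 * Real.sqrt (Real.exp (2 * z) - 1) * z) := by
  have h := g_convex.smul (c := Real.pi / 2) (by positivity)
  simpa [smul_eq_mul, mul_assoc] using h
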